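/- A classifier depending only on x₁, namely f(x) = sign(w₁ x₁) with w₁ > 0, has both standard accuracy exactly p and adversarial accuracy exactly p against any ℓ∞ adversary with ε < 1. -/

import Mathlib

open MeasureTheory ProbabilityTheory Real
open scoped ENNReal NNReal

noncomputable def signM : Measure ℝ :=
  (1/2 : ℝ≥0∞) • Measure.dirac (-1) + (1/2 : ℝ≥0∞) • Measure.dirac 1

noncomputable def flipM (p : ℝ) : Measure ℝ :=
  ENNReal.ofReal p • Measure.dirac 1 + ENNReal.ofReal (1 - p) • Measure.dirac (-1)

noncomputable def dataD (p η : ℝ) (d : ℕ) : Measure ((ℝ × (Fin d → ℝ)) × ℝ) :=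
  signM.bind fun y =>
    (((flipM p).map (fun s => s * y)).prod
      (Measure.pi fun _ : Fin d => gaussianReal (η * y) 1)).map (fun x => (x, y))

lemma flipM_apply (p : ℝ) (s : Set ℝ) (h1 : (1:ℝ) ∈ s) (h2 : (-1:ℝ) ∉ s) :
    flipM p s = ENNReal.ofReal p := by
  simp [flipM, Measure.dirac_apply, Set.indicator_of_mem h1, Set.indicator_of_notMem h2]

/-- The conditional kernel used in `dataD`. -/
noncomputable def condK (p η : ℝ) (d : ℕ) (y : ℝ) : Measure ((ℝ × (Fin d → ℝ)) × ℝ) :=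
  (((flipM p).map (fun s => s * y)).prod
      (Measure.pi fun _ : Fin d => gaussianReal (η * y) 1)).map (fun x => (x, y))

lemma setEq (d : ℕ) (A B : Set ℝ) :
    ({ω : (ℝ × (Fin d → ℝ)) × ℝ | (ω.1.1 ∈ A ∧ ω.2 = 1) ∨ (ω.1.1 ∈ B ∧ ω.2 = -1)}) =
    ((A ×ˢ Set.univ) ×ˢ {(1:ℝ)}) ∪ ((B ×ˢ Set.univ) ×ˢ {(-1:ℝ)}) := by
  ext ⟨⟨a, x⟩, z⟩; simp [Set.mem_prod] <;> aesop

lemma setMeas (d : ℕ) (A B : Set ℝ) (hA : MeasurableSet A) (hB : MeasurableSet B) :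
    MeasurableSet ({ω : (ℝ × (Fin d → ℝ)) × ℝ |
      (ω.1.1 ∈ A ∧ ω.2 = 1) ∨ (ω.1.1 ∈ B ∧ ω.2 = -1)}) := by
  rw [setEq]
  exact (((hA.prod MeasurableSet.univ).prod (measurableSet_singleton _)).union
    ((hB.prod MeasurableSet.univ).prod (measurableSet_singleton _)))

lemma condK_apply (p η : ℝ) (d : ℕ) (y : ℝ) (A B : Set ℝ)
    (hA : MeasurableSet A) (hB : MeasurableSet B) :
    condK p η d y ({ω : (ℝ × (Fin d → ℝ)) × ℝ |
        (ω.1.1 ∈ A ∧ ω.2 = 1) ∨ (ω.1.1 ∈ B ∧ ω.2 = -1)}) =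
      (flipM p) ((fun s => s * y) ⁻¹' {t | (t ∈ A ∧ y = 1) ∨ (t ∈ B ∧ y = -1)}) := by
  have hS := setMeas d A B hA hB
  rw [condK, Measure.map_apply measurable_prodMk_right hS]
  have hpre : ((fun x : ℝ × (Fin d → ℝ) => (x, y)) ⁻¹' {ω : (ℝ × (Fin d → ℝ)) × ℝ |
      (ω.1.1 ∈ A ∧ ω.2 = 1) ∨ (ω.1.1 ∈ B ∧ ω.2 = -1)}) =
      ({t | (t ∈ A ∧ y = 1) ∨ (t ∈ B ∧ y = -1)} : Set ℝ) ×ˢ Set.univ := by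
    ext x; simp [Set.mem_prod]
  rw [hpre, Measure.prod_prod, measure_univ, mul_one,
    Measure.map_apply (measurable_mul_const y)]
  have : ({t | (t ∈ A ∧ y = 1) ∨ (t ∈ B ∧ y = -1)} : Set ℝ) =
      (if y = 1 then A else ∅) ∪ (if y = -1 then B else ∅) := by
    ext t
    by_cases h1 : y = 1 <;> by_cases h2 : y = -1 <;> norm_num [h1, h2]
  rw [this]
  exact MeasurableSet.union (by split <;> simp [hA]) (by split <;> simp [hB])

lemma dataD_apply (p η : ℝ) (d : ℕ)
    (A B : Set ℝ) (hA : MeasurableSet A) (hB : MeasurableSet B)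
    (h1A : (1:ℝ) ∈ A) (h2A : (-1:ℝ) ∉ A) (h1B : (-1:ℝ) ∈ B) (h2B : (1:ℝ) ∉ B) :
    dataD p η d ({ω : (ℝ × (Fin d → ℝ)) × ℝ |
        (ω.1.1 ∈ A ∧ ω.2 = 1) ∨ (ω.1.1 ∈ B ∧ ω.2 = -1)}) = ENNReal.ofReal p := by
  have hS := setMeas d A B hA hB
  set g : ℝ → Measure ((ℝ × (Fin d → ℝ)) × ℝ) :=
    fun y => if y = 1 then condK p η d 1 else condK p η d (-1) with hg
  have hgmeas : Measurable g := by
    apply Measurable.ite (measurableSet_singleton (1:ℝ)) <;> exact measurable_const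
  have hmem : ({1, -1} : Set ℝ) ∈ ae signM := by
    rw [mem_ae_iff]
    have h1 : (1:ℝ) ∉ ({1, -1} : Set ℝ)ᶜ := by norm_num
    have h2 : (-1:ℝ) ∉ ({1, -1} : Set ℝ)ᶜ := by norm_num
    simp [signM, Measure.dirac_apply, Set.indicator_of_notMem h1,
      Set.indicator_of_notMem h2]
  have hae : (fun y => condK p η d y) =ᵐ[signM] g := by
    refine Filter.eventuallyEq_of_mem hmem ?_
    rintro y (rfl | rfl)
    · simp [hg]
    · have : ((-1:ℝ) = 1) = False := by norm_num
      simp [hg, this]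
  have hbind : dataD p η d = signM.bind g := by
    rw [show dataD p η d = signM.bind (fun y => condK p η d y) from rfl,
      Measure.bind, Measure.bind, Measure.map_congr hae]
  rw [hbind, Measure.bind_apply hS hgmeas.aemeasurable,
    show signM = (1/2 : ℝ≥0∞) • Measure.dirac (-1) + (1/2 : ℝ≥0∞) • Measure.dirac 1 from rfl,
    lintegral_add_measure, lintegral_smul_measure, lintegral_smul_measure,
    lintegral_dirac, lintegral_dirac]
  have hgm1 : g (-1) ({ω : (ℝ × (Fin d → ℝ)) × ℝ |
      (ω.1.1 ∈ A ∧ ω.2 = 1) ∨ (ω.1.1 ∈ B ∧ ω.2 = -1)}) = ENNReal.ofReal p := by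
    rw [hg]
    simp only
    rw [if_neg (by norm_num), condK_apply p η d (-1) A B hA hB]
    apply flipM_apply
    · simp only [Set.mem_preimage, Set.mem_setOf_eq]
      norm_num [h1B]
    · simp only [Set.mem_preimage, Set.mem_setOf_eq]
      norm_num [h2B]
  have hgp1 : g 1 ({ω : (ℝ × (Fin d → ℝ)) × ℝ |
      (ω.1.1 ∈ A ∧ ω.2 = 1) ∨ (ω.1.1 ∈ B ∧ ω.2 = -1)}) = ENNReal.ofReal p := by
    rw [hg]
    simp only [if_true, eq_self_iff_true]
    rw [condK_apply p η d 1 A B hA hB]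
    apply flipM_apply
    · simp only [Set.mem_preimage, Set.mem_setOf_eq]
      norm_num [h1A]
    · simp only [Set.mem_preimage, Set.mem_setOf_eq]
      norm_num [h2A]
  rw [hgm1, hgp1, smul_eq_mul, ← add_mul, ENNReal.add_halves, one_mul]

/-- The classifier f(x) = sign(w₁ x₁) with w₁ > 0, depending only on the robust
feature x₁, has standard accuracy exactly p and adversarial accuracy exactly p
against any ℓ∞ adversary with 0 ≤ ε < 1. -/
theorem robust_feature_classifier_accuracy (p η ε w₁ : ℝ) (d : ℕ)
    (hp : 1/2 ≤ p) (hp1 : p < 1) (hw : 0 < w₁) (hε0 : 0 ≤ ε) (hε : ε < 1) :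
    dataD p η d {ω | (if 0 < w₁ * ω.1.1 then (1:ℝ) else -1) = ω.2}
        = ENNReal.ofReal p ∧
      dataD p η d {ω | ∀ v : ℝ × (Fin d → ℝ), |v.1| ≤ ε → (∀ i, |v.2 i| ≤ ε) →
          (if 0 < w₁ * (ω.1.1 + v.1) then (1:ℝ) else -1) = ω.2}
        = ENNReal.ofReal p := by
  constructor
  · have h1 : {ω : (ℝ × (Fin d → ℝ)) × ℝ | (if 0 < w₁ * ω.1.1 then (1:ℝ) else -1) = ω.2} =
        {ω : (ℝ × (Fin d → ℝ)) × ℝ |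
          (ω.1.1 ∈ Set.Ioi (0:ℝ) ∧ ω.2 = 1) ∨ (ω.1.1 ∈ Set.Iic (0:ℝ) ∧ ω.2 = -1)} := by
      ext ω
      simp only [Set.mem_setOf_eq, Set.mem_Ioi, Set.mem_Iic]
      by_cases h : 0 < ω.1.1
      · rw [if_pos (by positivity)]
        constructor
        · intro hy; exact Or.inl ⟨h, hy.symm⟩
        · rintro (⟨_, hy⟩ | ⟨hle, _⟩)
          · exact hy.symm
          · linarith
      · rw [if_neg (fun hc => h (by nlinarith))]
        constructor
        · intro hy; exact Or.inr ⟨le_of_not_gt h, hy.symm⟩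
        · rintro (⟨hlt, _⟩ | ⟨_, hy⟩)
          · exact absurd hlt h
          · exact hy.symm
    rw [h1]
    exact dataD_apply p η d _ _ measurableSet_Ioi measurableSet_Iic
      (by norm_num) (by norm_num) (by norm_num) (by norm_num)
  · have h2 : {ω : (ℝ × (Fin d → ℝ)) × ℝ | ∀ v : ℝ × (Fin d → ℝ), |v.1| ≤ ε →
        (∀ i, |v.2 i| ≤ ε) → (if 0 < w₁ * (ω.1.1 + v.1) then (1:ℝ) else -1) = ω.2} =
        {ω : (ℝ × (Fin d → ℝ)) × ℝ |
          (ω.1.1 ∈ Set.Ioi ε ∧ ω.2 = 1) ∨ (ω.1.1 ∈ Set.Iic (-ε) ∧ ω.2 = -1)} := by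
      ext ω
      simp only [Set.mem_setOf_eq, Set.mem_Ioi, Set.mem_Iic]
      constructor
      · intro h
        have hA := h (ε, 0) (by rw [abs_of_nonneg hε0]) (fun i => by simpa using hε0)
        have hB := h (-ε, 0) (by rw [abs_neg, abs_of_nonneg hε0]) (fun i => by simpa using hε0)
        by_cases hc : 0 < w₁ * (ω.1.1 + -ε)
        · rw [if_pos hc] at hB
          left; exact ⟨by nlinarith, hB.symm⟩
        · rw [if_neg hc] at hB
          right
          refine ⟨?_, hB.symm⟩
          by_contra hgt
          push_neg at hgt
          rw [if_pos (by nlinarith)] at hA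
          rw [← hA] at hB
          norm_num at hB
      · rintro (⟨hlt, hy⟩ | ⟨hle, hy⟩) <;> intro v hv1 hv2
        · have := (abs_le.mp hv1).1
          rw [if_pos (by nlinarith)]
          exact hy.symm
        · have := (abs_le.mp hv1).2
          rw [if_neg (fun hc => by nlinarith)]
          exact hy.symm
    rw [h2]
    exact dataD_apply p η d _ _ measurableSet_Ioi measurableSet_Iic
      (by simpa using hε) (by simp; linarith) (by simp; linarith) (by simp; linarith)
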